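/- Let G be a graph, a a vertex, G' = G \ {a}, and K a potential maximal clique of G'. Then for every pair of non-adjacent vertices x, y ∈ K (in G), there exists a connected component C of G \ K such that both x and y have a neighbor in C. (That is, condition (b) of the PMC characterization is preserved when adding a vertex to the graph.) -/

import Mathlib

open SimpleGraph

variable {V : Type*}

/-- `C` is a connected component of `G \ K`:
nonempty, disjoint from `K`, connected, and maximal such. -/
def IsCompOf (G : SimpleGraph V) (K C : Set V) : Prop :=
  C.Nonempty ∧ Disjoint C K ∧ (G.induce C).Connected ∧
    ∀ D : Set V, C ⊆ D → Disjoint D K → (G.induce D).Connected → D = C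

/-- The neighborhood of a set `C`: vertices outside `C` with a neighbor in `C`. -/
def nbhd (G : SimpleGraph V) (C : Set V) : Set V :=
  {v | v ∉ C ∧ ∃ u ∈ C, G.Adj u v}

/-- `C` is a full component for `K` in `G`. -/
def IsFullComp (G : SimpleGraph V) (K C : Set V) : Prop :=
  IsCompOf G K C ∧ ∀ v ∈ K, ∃ u ∈ C, G.Adj u v

/-- Bouchitté–Todinca characterization of potential maximal cliques:
(a) no full component, (b) non-adjacent pairs of `K` covered by a common component. -/
def IsPMC (G : SimpleGraph V) (K : Set V) : Prop :=
  (∀ C : Set V, IsCompOf G K C → ¬ ∀ v ∈ K, ∃ u ∈ C, G.Adj u v) ∧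
  (∀ x ∈ K, ∀ y ∈ K, x ≠ y → ¬ G.Adj x y →
    ∃ C : Set V, IsCompOf G K C ∧ (∃ u ∈ C, G.Adj u x) ∧ (∃ u ∈ C, G.Adj u y))


noncomputable def induce_induce_iso (G : SimpleGraph V) (s : Set V) (t : Set s) :
    (G.induce s).induce t ≃g G.induce (Subtype.val '' t) := by
  refine ⟨Equiv.Set.image Subtype.val t Subtype.val_injective, ?_⟩
  intro u v
  simp [Equiv.Set.image, Equiv.Set.imageOfInjOn]

lemma exists_comp_extend [Fintype V] (G : SimpleGraph V) (K' X : Set V)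
    (hne : X.Nonempty) (hdisj : Disjoint X K') (hconn : (G.induce X).Connected) :
    ∃ C, IsCompOf G K' C ∧ X ⊆ C := by
  classical
  set S : Set (Set V) := {D | X ⊆ D ∧ Disjoint D K' ∧ (G.induce D).Connected}
  have hXS : X ∈ S := ⟨subset_rfl, hdisj, hconn⟩
  obtain ⟨C, hCS, hmax⟩ := Set.Finite.exists_maximalFor id S (Set.toFinite S) ⟨X, hXS⟩
  refine ⟨C, ⟨hne.mono hCS.1, hCS.2.1, hCS.2.2, ?_⟩, hCS.1⟩
  intro D hCD hD hDc
  exact (le_antisymm hCD (hmax ⟨hCS.1.trans hCD, hD, hDc⟩ hCD)).symm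

theorem stmt9 [Fintype V] (G : SimpleGraph V) (a : V)
    (K : Set {v : V // v ∈ ({v : V | v ≠ a} : Set V)})
    (hK : IsPMC (G.induce {v : V | v ≠ a}) K) :
    ∀ x ∈ Subtype.val '' K, ∀ y ∈ Subtype.val '' K, x ≠ y → ¬ G.Adj x y →
      ∃ C : Set V, IsCompOf G (Subtype.val '' K) C ∧
        (∃ u ∈ C, G.Adj u x) ∧ (∃ u ∈ C, G.Adj u y) := by
  rintro x ⟨x', hx'K, rfl⟩ y ⟨y', hy'K, rfl⟩ hxy hadj
  have hne : x' ≠ y' := fun h => hxy (congrArg Subtype.val h)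
  have hnadj : ¬ (G.induce {v : V | v ≠ a}).Adj x' y' := by
    simpa [SimpleGraph.comap_adj] using hadj
  obtain ⟨C', hC', ⟨u1, hu1, ha1⟩, ⟨u2, hu2, ha2⟩⟩ :=
    hK.2 x' hx'K y' hy'K hne hnadj
  have hXne : (Subtype.val '' C').Nonempty := hC'.1.image _
  have hXdisj : Disjoint (Subtype.val '' C') (Subtype.val '' K) := by
    rw [Set.disjoint_image_iff Subtype.val_injective]
    exact hC'.2.1
  have hXconn : (G.induce (Subtype.val '' C')).Connected :=
    ((induce_induce_iso G _ C').connected_iff).mp hC'.2.2.1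
  obtain ⟨C, hC, hXC⟩ := exists_comp_extend G _ _ hXne hXdisj hXconn
  exact ⟨C, hC, ⟨↑u1, hXC ⟨u1, hu1, rfl⟩, ha1⟩, ⟨↑u2, hXC ⟨u2, hu2, rfl⟩, ha2⟩⟩
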